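/- Let e be an edge of T. Then S(e) = ∅ if and only if e is the edge of maximum rank in T. Consequently, the SLD parent p(e) is defined for every edge of T except the unique maximum-rank edge. -/

import Mathlib

/- Single tree setting: `G` is a finite tree with injective edge ranks `r`.
`edgesBetween G e f` is the set of edges strictly between edges `e` and `f`
on the unique tree path connecting them (an edge `g ∉ {e,f}` lies on this path
iff it belongs to every walk containing both `e` and `f`). -/

open SimpleGraph

variable {V : Type*}

/-- The set of edges lying strictly between edges `e` and `f` on the tree path
connecting them (excluding `e` and `f`). -/
def edgesBetween (G : SimpleGraph V) (e f : Sym2 V) : Set (Sym2 V) :=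
  {g | g ∈ G.edgeSet ∧ g ≠ e ∧ g ≠ f ∧
    ∀ (a b : V) (w : G.Walk a b), e ∈ w.edges → f ∈ w.edges → g ∈ w.edges}

/-- `f` is an adjacent superior of `e`: `r e < r f` and every edge `g` on the
path between `e` and `f` satisfies `r g < r e`. -/
def AdjSup (G : SimpleGraph V) (r : Sym2 V → ℕ) (e f : Sym2 V) : Prop :=
  f ∈ G.edgeSet ∧ r e < r f ∧ ∀ g ∈ edgesBetween G e f, r g < r e

/-- `f` is an adjacent inferior of `e`: `r f < r e` and every edge `g` on the
path between `e` and `f` satisfies `r g < r e`. -/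
def AdjInf (G : SimpleGraph V) (r : Sym2 V → ℕ) (e f : Sym2 V) : Prop :=
  f ∈ G.edgeSet ∧ r f < r e ∧ ∀ g ∈ edgesBetween G e f, r g < r e

/-- `f` is the SLD parent of `e`: the minimum-rank adjacent superior of `e`. -/
def IsParent (G : SimpleGraph V) (r : Sym2 V → ℕ) (e f : Sym2 V) : Prop :=
  AdjSup G r e f ∧ ∀ g, AdjSup G r e g → r f ≤ r g

/-- The spine of `e`: the set of edges obtained by iterating the SLD parent
function starting from `e` (including `e` itself). -/
def spine (G : SimpleGraph V) (r : Sym2 V → ℕ) (e : Sym2 V) : Set (Sym2 V) :=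
  {f | Relation.ReflTransGen (IsParent G r) e f}

/-- Split a walk at an occurrence of an edge `g`. -/
lemma walk_split_at_edge {G : SimpleGraph V} :
    ∀ {a b : V} (w : G.Walk a b) {g : Sym2 V}, g ∈ w.edges →
      ∃ (c d : V) (hadj : G.Adj c d) (w1 : G.Walk a c) (w2 : G.Walk d b),
        s(c, d) = g ∧ w.edges = w1.edges ++ g :: w2.edges ∧
        w.length = w1.length + 1 + w2.length := by
  intro a b w
  induction w with
  | nil => intro g hg; simp at hg
  | cons h p ih =>
    intro g hg
    rw [SimpleGraph.Walk.edges_cons, List.mem_cons] at hg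
    rcases hg with hg | hg
    · exact ⟨_, _, h, SimpleGraph.Walk.nil, p, hg.symm, by simp [hg], by simp; omega⟩
    · obtain ⟨c, d, hadj, w1, w2, hcd, hedges, hlen⟩ := ih hg
      exact ⟨c, d, hadj, SimpleGraph.Walk.cons h w1, w2, hcd,
        by simp [hedges], by simp [hlen]; omega⟩

/-- Key lemma: if a walk contains `e` and some edge of rank exceeding `r e`,
then `e` has an adjacent superior. -/
lemma exists_adjSup_of_walk {G : SimpleGraph V} {r : Sym2 V → ℕ} {e : Sym2 V}
    (hr : Set.InjOn r G.edgeSet) (he : e ∈ G.edgeSet) :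
    ∀ (n : ℕ) {a b : V} (w : G.Walk a b), w.length = n → e ∈ w.edges →
      ∀ f, f ∈ w.edges → r e < r f → ∃ f', AdjSup G r e f' := by
  intro n
  induction n using Nat.strong_induction_on with
  | _ n ih =>
    intro a b w hlen hew f hfw hrf
    by_cases hall : ∀ g ∈ edgesBetween G e f, r g < r e
    · exact ⟨f, w.edges_subset_edgeSet hfw, hrf, hall⟩
    push_neg at hall
    obtain ⟨g, hg, hge⟩ := hall
    obtain ⟨hgE, hgne, hgnf, hgbtw⟩ := hg
    have hgw : g ∈ w.edges := hgbtw a b w hew hfw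
    have hrge : r e < r g :=
      lt_of_le_of_ne hge (fun hh => hgne (hr hgE he hh.symm))
    obtain ⟨c, d, hadj, w1, w2, hcd, hedges, hlen2⟩ := walk_split_at_edge w hgw
    have hew' : e ∈ w1.edges ∨ e ∈ w2.edges := by
      rw [hedges, List.mem_append, List.mem_cons] at hew
      rcases hew with h | h
      · exact Or.inl h
      · rcases h with h | h
        · exact absurd h.symm hgne
        · exact Or.inr h
    rcases hew' with hew1 | hew2
    · rcases Nat.eq_zero_or_pos w2.length with h2 | h2
      · -- w2 is trivial, so f lies in w1 (it is ≠ g); recurse on w1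
        have hfw1 : f ∈ w1.edges := by
          have : w2.edges = [] := List.length_eq_zero_iff.mp
            (by rw [SimpleGraph.Walk.length_edges, h2])
          rw [hedges, this, List.mem_append, List.mem_cons] at hfw
          rcases hfw with h | h
          · exact h
          · rcases h with h | h
            · exact absurd h.symm hgnf
            · simp at h
        exact ih w1.length (by omega) w1 rfl hew1 f hfw1 hrf
      · -- recurse on the strictly shorter walk w1.concat hadj, containing e and g
        have hlt : (w1.concat hadj).length < n := by
          rw [SimpleGraph.Walk.length_concat]; omega
        refine ih _ hlt (w1.concat hadj) rfl ?_ g ?_ hrge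
        · rw [SimpleGraph.Walk.edges_concat, List.concat_eq_append]
          exact List.mem_append_left _ hew1
        · rw [SimpleGraph.Walk.edges_concat, List.concat_eq_append, hcd]
          exact List.mem_append_right _ (List.mem_singleton_self g)
    · rcases Nat.eq_zero_or_pos w1.length with h1 | h1
      · have hfw2 : f ∈ w2.edges := by
          have : w1.edges = [] := List.length_eq_zero_iff.mp
            (by rw [SimpleGraph.Walk.length_edges, h1])
          rw [hedges, this, List.nil_append, List.mem_cons] at hfw
          rcases hfw with h | h
          · exact absurd h.symm hgnf
          · exact h
        exact ih w2.length (by omega) w2 rfl hew2 f hfw2 hrf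
      · have hlt : (SimpleGraph.Walk.cons hadj w2).length < n := by
          rw [SimpleGraph.Walk.length_cons]; omega
        refine ih _ hlt (SimpleGraph.Walk.cons hadj w2) rfl ?_ g ?_ hrge
        · rw [SimpleGraph.Walk.edges_cons]
          exact List.mem_cons_of_mem _ hew2
        · rw [SimpleGraph.Walk.edges_cons, hcd]
          exact List.mem_cons_self
      
/-- In a connected graph, any two edges lie on a common walk. -/
lemma exists_walk_two_edges {G : SimpleGraph V} (hc : G.Connected)
    {e f : Sym2 V} (he : e ∈ G.edgeSet) (hf : f ∈ G.edgeSet) :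
    ∃ (a b : V) (w : G.Walk a b), e ∈ w.edges ∧ f ∈ w.edges := by
  induction e using Sym2.ind with
  | _ u v =>
  induction f using Sym2.ind with
  | _ x y =>
  rw [SimpleGraph.mem_edgeSet] at he hf
  obtain ⟨p⟩ := hc.preconnected v x
  refine ⟨u, y, SimpleGraph.Walk.cons he (p.concat hf), ?_, ?_⟩
  · rw [SimpleGraph.Walk.edges_cons]; exact List.mem_cons_self
  · rw [SimpleGraph.Walk.edges_cons, SimpleGraph.Walk.edges_concat,
      List.concat_eq_append]
    exact List.mem_cons_of_mem _ (List.mem_append_right _ (List.mem_singleton_self _))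

/-- `S(e) = ∅` iff `e` is the maximum-rank edge of `T`; consequently the SLD
parent `p(e)` is defined for every edge except the unique maximum-rank edge. -/
theorem stmt0 [Fintype V] (G : SimpleGraph V) (hT : G.IsTree)
    (r : Sym2 V → ℕ) (hr : Set.InjOn r G.edgeSet)
    (hne : G.edgeSet.Nonempty)
    (e : Sym2 V) (he : e ∈ G.edgeSet) :
    ({f | AdjSup G r e f} = ∅ ↔ ∀ f ∈ G.edgeSet, r f ≤ r e) ∧
    ((∃ f, IsParent G r e f) ↔ ¬ ∀ f ∈ G.edgeSet, r f ≤ r e) := by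
  have hsup : (¬ ∀ f ∈ G.edgeSet, r f ≤ r e) → ∃ f', AdjSup G r e f' := by
    intro hmax
    push_neg at hmax
    obtain ⟨f0, hf0E, hf0⟩ := hmax
    obtain ⟨a, b, w, hew, hfw⟩ := exists_walk_two_edges hT.isConnected he hf0E
    exact exists_adjSup_of_walk hr he w.length w rfl hew f0 hfw hf0
  constructor
  · constructor
    · intro hS
      by_contra hmax
      obtain ⟨f', hf'⟩ := hsup hmax
      exact Set.notMem_empty f' (hS ▸ hf')
    · intro hmax
      ext f
      simp only [Set.mem_setOf_eq, Set.mem_empty_iff_false, iff_false]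
      rintro ⟨hfE, hlt, -⟩
      exact absurd (hmax f hfE) (Nat.not_le_of_lt hlt)
  · constructor
    · rintro ⟨f, ⟨hfE, hlt, -⟩, -⟩ hmax
      exact absurd (hmax f hfE) (Nat.not_le_of_lt hlt)
    · intro hmax
      obtain ⟨f', hf'⟩ := hsup hmax
      have hS : {n | ∃ f, AdjSup G r e f ∧ r f = n}.Nonempty := ⟨r f', f', hf', rfl⟩
      obtain ⟨f, hf, hfr⟩ := Nat.sInf_mem hS
      refine ⟨f, hf, fun g hg => ?_⟩
      rw [hfr]
      exact Nat.sInf_le ⟨g, hg, rfl⟩
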